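/- arXiv:0704.2521 — 5 statements merged into one kernel-verified Lean document; each statement's English description precedes it below -/
import Mathlib

section
/- Let k and n be coprime integers with n ≥ 1, and suppose cos(2πk/n) is not equal to −1, 0, or 1. Then cos(2πk/n) is not an algebraic integer. -/
open Complex in
lemma aux_abs_lt_one {v : ℂ} (hv : ‖v‖ = 1) (hv1 : v ≠ 1) (hv2 : v ≠ -1) :
    ‖(v + v⁻¹) / 2‖ < 1 := by
  have hinv : v⁻¹ = starRingEnd ℂ v := by
    rw [Complex.inv_def, Complex.normSq_eq_norm_sq, hv]; simp
  have hre : v + v⁻¹ = ((2 * v.re : ℝ) : ℂ) := by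
    rw [hinv, Complex.add_conj]
  have hsq : v.re ^ 2 + v.im ^ 2 = 1 := by
    have h := Complex.sq_norm v
    rw [hv, Complex.normSq_apply] at h
    nlinarith
  have him : v.im ≠ 0 := by
    intro h
    have hre2 : (v.re - 1) * (v.re + 1) = 0 := by nlinarith
    rcases mul_eq_zero.mp hre2 with h' | h'
    · apply hv1
      apply Complex.ext
      · simp only [Complex.one_re]; linarith
      · simp [h]
    · apply hv2
      apply Complex.ext
      · simp only [Complex.neg_re, Complex.one_re]; linarith
      · simp [h]
  have hlt : |v.re| < 1 := by
    rw [abs_lt]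
    constructor <;> nlinarith [pow_pos (abs_pos.mpr him) 2, _root_.sq_abs v.im]
  rw [hre, norm_div]
  simp only [Complex.norm_real, Real.norm_eq_abs, Complex.norm_two]
  rw [div_lt_one (by norm_num), abs_mul, _root_.abs_two]
  linarith [abs_nonneg v.re]

/-- Let `k`, `n` be coprime integers with `n ≥ 1`, and suppose `cos(2πk/n)` is not
`-1`, `0` or `1`. Then `cos(2πk/n)` is not an algebraic integer. -/
theorem stmt_5 (k n : ℤ) (hn : 1 ≤ n) (hkn : Int.gcd k n = 1)
    (h1 : Real.cos (2 * Real.pi * k / n) ≠ -1)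
    (h0 : Real.cos (2 * Real.pi * k / n) ≠ 0)
    (h2 : Real.cos (2 * Real.pi * k / n) ≠ 1) :
    ¬ IsIntegral ℤ (Real.cos (2 * Real.pi * k / n)) := by
  intro hint
  by_cases hn1 : n = 1
  · apply h2
    subst hn1
    have : 2 * Real.pi * (k : ℝ) / ((1 : ℤ) : ℝ) = (k : ℝ) * (2 * Real.pi) := by
      push_cast; ring
    rw [this, Real.cos_int_mul_two_pi]
  by_cases hn2 : n = 2
  · apply h1
    subst hn2
    obtain ⟨t, rfl⟩ : Odd k := by
      rcases Int.even_or_odd k with ⟨t, rfl⟩ | ho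
      · exfalso
        have hd : (2:ℕ) ∣ Int.gcd (t + t) 2 :=
          Nat.dvd_gcd (Int.natAbs_dvd_natAbs.mpr (by omega : (2:ℤ) ∣ (t+t))) (by norm_num)
        omega
      · exact ho
    have : 2 * Real.pi * ((2 * t + 1 : ℤ) : ℝ) / ((2 : ℤ) : ℝ) = (t : ℝ) * (2 * Real.pi) + Real.pi := by
      push_cast; ring
    rw [this, Real.cos_int_mul_two_pi_add_pi]
  have hn3 : 3 ≤ n := by omega
  -- setup
  set N : ℕ := n.toNat with hNdef
  have hNn : (N : ℤ) = n := Int.toNat_of_nonneg (by omega)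
  have hN3 : 3 ≤ N := by omega
  have hNR : ((n : ℝ)) = (N : ℝ) := by exact_mod_cast congrArg (Int.cast : ℤ → ℝ) hNn.symm
  set P : ℕ+ := ⟨N, by omega⟩ with hPdef
  haveI : NeZero N := ⟨by omega⟩
  haveI : NeZero (N : ℚ) := ⟨by exact_mod_cast (show N ≠ 0 by omega)⟩
  let L := CyclotomicField N ℚ
  haveI : IsCyclotomicExtension {N} ℚ L := CyclotomicField.isCyclotomicExtension N ℚ
  have hPN : (P : ℕ) = N := rfl
  let ζ : L := IsCyclotomicExtension.zeta N ℚ L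
  have hζ : IsPrimitiveRoot ζ N := IsCyclotomicExtension.zeta_spec N ℚ L
  have : NumberField L := IsCyclotomicExtension.numberField {N} ℚ L
  -- an embedding
  let σ : L →ₐ[ℚ] ℂ := IsAlgClosed.lift
  have hσζ : IsPrimitiveRoot (σ ζ) N := hζ.map_of_injective σ.injective
  obtain ⟨m, hmN, hm, hexp⟩ := (Complex.isPrimitiveRoot_iff _ N (by omega)).mp hσζ
  -- inverse of m mod N
  obtain ⟨m', -, hmm'⟩ := Nat.exists_mul_mod_eq_one_of_coprime hm (by omega)
  obtain ⟨t, hmt⟩ : ∃ t, m * m' = N * t + 1 :=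
    ⟨m * m' / N, by have := Nat.div_add_mod (m * m') N; omega⟩
  have hm' : Nat.Coprime m' N := by
    have hd : Nat.gcd m' N ∣ 1 := by
      have h1 : Nat.gcd m' N ∣ m * m' := Dvd.dvd.mul_left (Nat.gcd_dvd_left m' N) m
      have h2 : Nat.gcd m' N ∣ N * t := Dvd.dvd.mul_right (Nat.gcd_dvd_right m' N) t
      have := Nat.dvd_sub h1 h2
      simpa [hmt] using this
    exact Nat.dvd_one.mp hd
  set j : ℤ := k * (m' : ℤ) with hjdef
  have hkN : Nat.Coprime k.natAbs N := by
    have : n.natAbs = N := by omega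
    rwa [Int.gcd, this] at hkn
  have hjN : Int.gcd j N = 1 := by
    have : j.natAbs = k.natAbs * m' := by simp [hjdef, Int.natAbs_mul]
    rw [Int.gcd, this, Int.natAbs_natCast]
    exact Nat.Coprime.mul hkN hm'
  have hζ0 : ζ ≠ 0 := hζ.ne_zero (by omega)
  set β : L := (ζ ^ j + ζ ^ (-j)) / 2 with hβdef
  have hτβ : ∀ τ : L →ₐ[ℚ] ℂ, τ β = (τ ζ ^ j + (τ ζ ^ j)⁻¹) / 2 := by
    intro τ
    have h : τ β = (τ (ζ ^ j) + τ (ζ ^ (-j))) / 2 := by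
      rw [hβdef, map_div₀, map_add, map_ofNat]
    rw [h, map_zpow₀, map_zpow₀, zpow_neg]
  have hbound : ∀ τ : L →ₐ[ℚ] ℂ, ‖τ β‖ < 1 := by
    intro τ
    have hτζ : IsPrimitiveRoot (τ ζ) N := hζ.map_of_injective τ.injective
    have habs : ‖τ ζ ^ j‖ = 1 := by
      have hone : ‖τ ζ‖ = 1 := by
        exact hτζ.norm'_eq_one (by omega)
      rw [norm_zpow, hone, one_zpow]
    have hv1 : τ ζ ^ j ≠ 1 := by
      intro hv
      have hdvd : (N : ℤ) ∣ j := (hτζ.zpow_eq_one_iff_dvd j).mp hv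
      have h1 : (N : ℕ) ∣ j.natAbs := by
        have := Int.natAbs_dvd_natAbs.mpr hdvd
        simpa using this
      have h2 : N ∣ Nat.gcd j.natAbs N := Nat.dvd_gcd h1 dvd_rfl
      rw [show Nat.gcd j.natAbs N = 1 from hjN] at h2
      exact absurd (Nat.dvd_one.mp h2) (by omega)
    have hv2 : τ ζ ^ j ≠ -1 := by
      intro hv
      have hτζ0 : τ ζ ≠ 0 := fun h => hζ0 (map_eq_zero_iff τ τ.injective |>.mp (h ▸ rfl))
      have hsq : τ ζ ^ (j * 2) = 1 := by
        rw [zpow_mul]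
        rw [hv]
        norm_num
      have hdvd : (N : ℤ) ∣ j * 2 := (hτζ.zpow_eq_one_iff_dvd _).mp hsq
      have hcop : IsCoprime (j : ℤ) (N : ℤ) := Int.isCoprime_iff_gcd_eq_one.mpr hjN
      have : (N : ℤ) ∣ 2 := (hcop.symm).dvd_of_dvd_mul_left hdvd
      have := Int.le_of_dvd (by norm_num) this
      omega
    rw [hτβ τ]
    exact aux_abs_lt_one habs hv1 hv2
  -- compute σ β
  have hσβ : σ β = ((Real.cos (2 * Real.pi * k / n) : ℝ) : ℂ) := by
    rw [hτβ σ]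
    have hζσ : σ ζ = Complex.exp (2 * Real.pi * Complex.I * (m / N)) := hexp.symm
    have hpow : σ ζ ^ j = Complex.exp (((2 * Real.pi * k / n : ℝ) : ℂ) * Complex.I) := by
      rw [hζσ, ← Complex.exp_int_mul]
      have harg : (j : ℂ) * (2 * (Real.pi : ℂ) * Complex.I * ((m : ℂ) / (N : ℂ))) =
          ((2 * Real.pi * k / n : ℝ) : ℂ) * Complex.I +
            ((k * t : ℤ) : ℂ) * (2 * (Real.pi : ℂ) * Complex.I) := by
        have hc : ((m : ℂ)) * ((m' : ℂ)) = (N : ℂ) * (t : ℂ) + 1 := by exact_mod_cast hmt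
        have hNC : (N : ℂ) ≠ 0 := Nat.cast_ne_zero.mpr (by omega)
        have hnn : ((n : ℝ) : ℂ) = (N : ℂ) := by
          rw [hNR]; push_cast; ring
        rw [hjdef]
        push_cast [hnn]
        field_simp
        ring_nf
        push_cast
        linear_combination (k : ℂ) * hc
      rw [harg, Complex.exp_add, Complex.exp_int_mul_two_pi_mul_I, mul_one]
    rw [hpow, ← Complex.exp_neg]
    have hcos : ((Real.cos (2 * Real.pi * k / n) : ℝ) : ℂ) =
        (Complex.exp (((2 * Real.pi * k / n : ℝ) : ℂ) * Complex.I) +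
          Complex.exp (-(((2 * Real.pi * k / n : ℝ) : ℂ) * Complex.I))) / 2 := by
      rw [Complex.ofReal_cos, eq_div_iff (two_ne_zero' ℂ), mul_comm, Complex.two_cos]
      ring_nf
    rw [hcos]
  -- transfer integrality
  have hαc : IsIntegral ℤ ((Real.cos (2 * Real.pi * k / n) : ℝ) : ℂ) :=
    hint.map Complex.ofRealHom.toIntAlgHom
  have hβint : IsIntegral ℤ β := by
    apply (isIntegral_algHom_iff σ.toRingHom.toIntAlgHom
      (show Function.Injective σ.toRingHom.toIntAlgHom from σ.injective)).mp
    show IsIntegral ℤ (σ β)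
    rw [hσβ]; exact hαc
  have hNormInt : IsIntegral ℤ (Algebra.norm ℚ β) := Algebra.isIntegral_norm ℚ hβint
  obtain ⟨c, hc⟩ := IsIntegrallyClosed.isIntegral_iff.mp hNormInt
  rw [eq_intCast (algebraMap ℤ ℚ)] at hc
  have hprod := Algebra.norm_eq_prod_embeddings ℚ ℂ β
  have h2 : ∏ τ : L →ₐ[ℚ] ℂ, ‖τ β‖ < 1 := by
    classical
    rw [← Finset.mul_prod_erase Finset.univ _ (Finset.mem_univ σ)]
    have hle : ∏ τ ∈ Finset.univ.erase σ, ‖τ β‖ ≤ 1 :=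
      Finset.prod_le_one (fun τ _ => norm_nonneg _) (fun τ _ => (hbound τ).le)
    calc ‖σ β‖ * ∏ τ ∈ Finset.univ.erase σ, ‖τ β‖
        ≤ ‖σ β‖ * 1 :=
          mul_le_mul_of_nonneg_left hle (norm_nonneg _)
      _ < 1 := by rw [mul_one]; exact hbound σ
  have habsc : |(c : ℝ)| < 1 := by
    have e1 : ((c : ℝ) : ℂ) = algebraMap ℚ ℂ ((c : ℚ)) := by
      rw [eq_ratCast (algebraMap ℚ ℂ)]; push_cast; ring
    calc |(c : ℝ)| = ‖algebraMap ℚ ℂ ((c : ℚ))‖ := by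
          rw [← e1, Complex.norm_real, Real.norm_eq_abs]
      _ = ‖∏ τ : L →ₐ[ℚ] ℂ, τ β‖ := by rw [hc, hprod]
      _ = ∏ τ : L →ₐ[ℚ] ℂ, ‖τ β‖ := Complex.norm_prod _ _
      _ < 1 := h2
  have hc0 : c = 0 := by
    have h5 : |c| < 1 := by exact_mod_cast habsc
    have := abs_lt.mp h5
    omega
  have hβ0 : β = 0 := by
    have hz : Algebra.norm ℚ β = 0 := by rw [← hc, hc0]; norm_num
    exact Algebra.norm_eq_zero_iff.mp hz
  apply h0
  have h4 := hσβ
  rw [hβ0, map_zero] at h4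
  exact_mod_cast h4.symm
end

section
/- Let α be a real algebraic integer with 0 < |α| < 1. Then arccos(α) is not a rational multiple of π; that is, arccos(α)/π is irrational. -/
open Polynomial IntermediateField

set_option maxHeartbeats 1000000 in
/-- Let `α` be a real algebraic integer with `0 < |α| < 1`. Then `arccos α` is not a
rational multiple of `π`: `arccos(α)/π` is irrational. -/
theorem stmt_6 (α : ℝ) (hint : IsIntegral ℤ α) (h0 : 0 < |α|) (h1 : |α| < 1) :
    Irrational (Real.arccos α / Real.pi) := by
  classical
  rw [Irrational]
  rintro ⟨q, hq⟩
  have hπ : Real.pi ≠ 0 := Real.pi_ne_zero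
  have harccos : Real.arccos α = q * Real.pi := by
    field_simp at hq; linarith [hq]
  have hcos : Real.cos ((q : ℝ) * Real.pi) = α := by
    rw [← harccos]
    exact Real.cos_arccos (by cases abs_cases α <;> linarith) (by cases abs_cases α <;> linarith)
  set θ : ℝ := (q : ℝ) * Real.pi with hθ
  set z : ℂ := Complex.exp (θ * Complex.I) with hz
  have hdc : ((q.den : ℂ)) ≠ 0 := by exact_mod_cast q.den_ne_zero
  have hqden : (q : ℂ) * (q.den : ℂ) = (q.num : ℂ) := by
    rw [Rat.cast_def]; field_simp
  have hzpow : z ^ (2 * q.den) = 1 := by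
    rw [hz, ← Complex.exp_nat_mul]
    rw [show ((2 * q.den : ℕ) : ℂ) * ((θ : ℂ) * Complex.I)
        = (q.num : ℂ) * (2 * (Real.pi : ℂ) * Complex.I) by
      push_cast [hθ]
      linear_combination (2 * (Real.pi : ℂ) * Complex.I) * hqden]
    exact Complex.exp_int_mul_two_pi_mul_I q.num
  have hn0 : (2 * q.den : ℕ) ≠ 0 := by positivity
  have hz0 : z ≠ 0 := Complex.exp_ne_zero _
  -- α = (z + z⁻¹)/2 in ℂ
  have hαz : ((α : ℂ)) = (z + z⁻¹) / 2 := by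
    rw [hz, ← Complex.exp_neg]
    have : Complex.cos (θ : ℂ) = (Complex.exp ((θ:ℂ) * Complex.I)
        + Complex.exp (-((θ:ℂ) * Complex.I))) / 2 := by
      rw [Complex.cos]; ring_nf
    rw [← this, ← Complex.ofReal_cos, hcos]
  -- z is integral over ℤ
  have hzint : IsIntegral ℤ z := by
    refine ⟨X ^ (2 * q.den) - C 1, monic_X_pow_sub_C 1 hn0, ?_⟩
    simp [hzpow]
  have hzintQ : IsIntegral ℚ z := hzint.tower_top
  -- the number field K = ℚ(z)
  set K : IntermediateField ℚ ℂ := ℚ⟮z⟯ with hK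
  haveI : FiniteDimensional ℚ K := IntermediateField.adjoin.finiteDimensional hzintQ
  set zK : K := IntermediateField.AdjoinSimple.gen ℚ z with hzK
  have hzKcoe : (zK : ℂ) = z := rfl
  set αK : K := (zK + zK⁻¹) / 2 with hαK
  have hαKcoe : (αK : ℂ) = (α : ℂ) := by
    show (algebraMap K ℂ) ((zK + zK⁻¹) / 2) = (α : ℂ)
    rw [map_div₀, map_add, map_inv₀, map_ofNat]
    rw [show (algebraMap K ℂ) zK = z from rfl, hαz]
  have hαK0 : αK ≠ 0 := by
    intro h
    apply absurd (h0.ne' : |α| ≠ 0)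
    simp only [abs_eq_zero, not_not]
    have : ((α : ℂ)) = 0 := by rw [← hαKcoe, h]; simp
    exact_mod_cast this
  -- αK is an algebraic integer
  have hαKint : IsIntegral ℤ αK := by
    have h1 : IsIntegral ℤ ((α : ℂ)) := hint.map (IsScalarTower.toAlgHom ℤ ℝ ℂ)
    rw [← hαKcoe] at h1
    exact (isIntegral_algebraMap_iff (algebraMap K ℂ).injective).mp h1
  -- norm of αK is a nonzero rational integer
  have hnormint : IsIntegral ℤ (Algebra.norm ℚ αK) :=
    Algebra.isIntegral_norm ℚ hαKint
  obtain ⟨m, hm⟩ := IsIntegrallyClosed.isIntegral_iff.mp hnormint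
  have hnorm0 : Algebra.norm ℚ αK ≠ 0 := by
    rw [Algebra.norm_ne_zero_iff]; exact hαK0
  have hm0 : m ≠ 0 := by rintro rfl; simp at hm; exact hnorm0 hm.symm
  -- norm = product over embeddings
  have hprod : (algebraMap ℚ ℂ) (Algebra.norm ℚ αK) = ∏ σ : K →ₐ[ℚ] ℂ, σ αK :=
    Algebra.norm_eq_prod_embeddings ℚ ℂ αK
  -- each embedding has |σ αK| ≤ 1
  have hbound : ∀ σ : K →ₐ[ℚ] ℂ, ‖σ αK‖ ≤ 1 := by
    intro σ
    have hzpowK : zK ^ (2 * q.den) = 1 := by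
      have : ((zK ^ (2 * q.den) : K) : ℂ) = ((1 : K) : ℂ) := by push_cast [hzKcoe, hzpow]; simp
      exact_mod_cast this
    have hσz : ‖σ zK‖ = 1 := by
      have : (σ zK) ^ (2 * q.den) = 1 := by rw [← map_pow, hzpowK, map_one]
      exact Complex.norm_eq_one_of_pow_eq_one this hn0
    have hσz0 : σ zK ≠ 0 := by
      intro h; rw [h] at hσz; simp at hσz
    have : σ αK = (σ zK + (σ zK)⁻¹) / 2 := by
      rw [hαK, map_div₀, map_add, map_inv₀, map_ofNat]
    rw [this]
    rw [norm_div]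
    have h2 : ‖(2:ℂ)‖ = 2 := by norm_num
    rw [h2]
    have : ‖σ zK + (σ zK)⁻¹‖ ≤ 2 := by
      calc ‖σ zK + (σ zK)⁻¹‖ ≤ ‖σ zK‖ + ‖(σ zK)⁻¹‖ :=
            norm_add_le _ _
        _ = 2 := by rw [norm_inv, hσz]; norm_num
    linarith
  -- the inclusion embedding gives |α| < 1
  set σ₀ : K →ₐ[ℚ] ℂ := K.val with hσ₀
  have hσ₀α : ‖σ₀ αK‖ = |α| := by
    rw [hσ₀]
    have : (K.val αK : ℂ) = (α : ℂ) := hαKcoe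
    exact (congrArg norm this).trans (by rw [Complex.norm_real, Real.norm_eq_abs])
  -- product estimate
  have habs : ‖(algebraMap ℚ ℂ) (Algebra.norm ℚ αK)‖ < 1 := by
    rw [hprod, norm_prod]
    calc (∏ σ : K →ₐ[ℚ] ℂ, ‖σ αK‖)
        ≤ ∏ σ : K →ₐ[ℚ] ℂ, (if σ = σ₀ then |α| else 1) := by
          apply Finset.prod_le_prod
          · intro i _; positivity
          · intro i _
            by_cases h : i = σ₀
            · simp [h, hσ₀α.le]
            · simp [h, hbound i]
      _ = |α| := by rw [Finset.prod_ite_eq' Finset.univ σ₀ (fun _ => |α|)]; simp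
      _ < 1 := h1
  -- but the norm is a nonzero integer
  have : (1 : ℝ) ≤ ‖(algebraMap ℚ ℂ) (Algebra.norm ℚ αK)‖ := by
    rw [← hm]
    have : (algebraMap ℚ ℂ) ((algebraMap ℤ ℚ) m) = (m : ℂ) := by simp
    rw [this]
    rw [Complex.norm_intCast]
    exact_mod_cast Int.one_le_abs hm0
  linarith
end

section
/- Let m ≥ 3 and 1 ≤ j < m be integers, and let λ be the real number with λ > 1 and λ^{2m} = λ^{2j} + 1. Then arccos(λ^{−m}) is not a rational multiple of π; that is, arccos(λ^{−m})/π is irrational. -/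
open Polynomial

/-- Product of a multiset of reals each in `[0,1]` is at most 1. -/
lemma multiset_prod_le_one (s : Multiset ℝ) (h : ∀ r ∈ s, 0 ≤ r ∧ r ≤ 1) : s.prod ≤ 1 := by
  induction s using Multiset.induction_on with
  | empty => simp
  | cons a t ih =>
    rw [Multiset.prod_cons]
    have ha := h a (Multiset.mem_cons_self a t)
    have ht := ih fun r hr => h r (Multiset.mem_cons_of_mem hr)
    have htnn : 0 ≤ t.prod := Multiset.prod_nonneg fun r hr => (h r (Multiset.mem_cons_of_mem hr)).1
    calc a * t.prod ≤ 1 * 1 := mul_le_mul ha.2 ht htnn zero_le_one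
    _ = 1 := one_mul 1

/-- Any complex root of `T n - 1` (`n ≠ 0`) has absolute value at most 1. -/
lemma abs_le_one_of_T_eq_one {n : ℤ} (hn : n ≠ 0) {y : ℂ}
    (hy : (Polynomial.Chebyshev.T ℂ n).eval y = 1) : ‖y‖ ≤ 1 := by
  obtain ⟨θ, rfl⟩ := Complex.cos_surjective y
  rw [Polynomial.Chebyshev.T_complex_cos] at hy
  obtain ⟨k, hk⟩ := Complex.cos_eq_one_iff.mp hy
  have hθ : θ = ((2 * k * Real.pi / n : ℝ) : ℂ) := by
    have hn' : (n : ℂ) ≠ 0 := Int.cast_ne_zero.mpr hn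
    push_cast
    rw [eq_div_iff hn']
    linear_combination -hk
  rw [hθ, ← Complex.ofReal_cos, Complex.norm_real, Real.norm_eq_abs]
  exact abs_le.mpr ⟨Real.neg_one_le_cos _, Real.cos_le_one _⟩

/-- An algebraic integer `x` with `0 < x < 1` cannot satisfy `T n x = 1` for `n ≠ 0`. -/
lemma not_T_eq_one_of_isIntegral {x : ℝ} (hint : IsIntegral ℤ x) (hx0 : 0 < x) (hx1 : x < 1)
    {n : ℤ} (hn : n ≠ 0) (hT : (Polynomial.Chebyshev.T ℝ n).eval x = 1) : False := by
  set p := minpoly ℤ x with hp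
  have hmonic : p.Monic := minpoly.monic hint
  -- p divides T n - 1 over ℤ
  have hdvd : p ∣ Polynomial.Chebyshev.T ℤ n - 1 := by
    apply minpoly.isIntegrallyClosed_dvd hint
    rw [map_sub, map_one, Polynomial.Chebyshev.aeval_T, hT, sub_self]
  -- constant coefficient is a nonzero integer
  have hx_ne : x ≠ 0 := ne_of_gt hx0
  have hc0 : p.coeff 0 ≠ 0 := by
    intro hc
    have hXdvd : (X : ℤ[X]) ∣ p := Polynomial.X_dvd_iff.mpr hc
    obtain ⟨c, hcc⟩ := hXdvd
    have hirr : Irreducible p := minpoly.irreducible hint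
    rcases hirr.isUnit_or_isUnit hcc with h1 | h2
    · exact Polynomial.not_isUnit_X h1
    · obtain ⟨r, hr, hrc⟩ := Polynomial.isUnit_iff.mp h2
      have haev : Polynomial.aeval x p = 0 := by rw [hp]; exact minpoly.aeval ℤ x
      rw [hcc, ← hrc] at haev
      simp only [map_mul, Polynomial.aeval_X, Polynomial.aeval_C] at haev
      have hr0 : (r : ℝ) ≠ 0 := by
        have := Int.isUnit_iff.mp hr
        rcases this with h | h <;> simp [h]
      exact hx_ne (by
        rcases mul_eq_zero.mp haev with h' | h'
        · exact h'
        · exact absurd h' (by simpa using hr0))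
  -- map to ℂ
  set P : ℂ[X] := p.map (Int.castRingHom ℂ) with hP
  have hPmonic : P.Monic := hmonic.map _
  have hPne : P ≠ 0 := hPmonic.ne_zero
  have hPdvd : P ∣ Polynomial.Chebyshev.T ℂ n - 1 := by
    have := Polynomial.map_dvd (Int.castRingHom ℂ) hdvd
    rwa [Polynomial.map_sub, Polynomial.map_one, Polynomial.Chebyshev.map_T] at this
  -- every root of P has absolute value ≤ 1
  have hroots_le : ∀ y ∈ P.roots, ‖y‖ ≤ 1 := by
    intro y hy
    have hyP : P.eval y = 0 := Polynomial.isRoot_of_mem_roots hy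
    have : (Polynomial.Chebyshev.T ℂ n - 1).eval y = 0 :=
      Polynomial.eval_eq_zero_of_dvd_of_eval_eq_zero hPdvd hyP
    rw [Polynomial.eval_sub, Polynomial.eval_one, sub_eq_zero] at this
    exact abs_le_one_of_T_eq_one hn this
  -- x is a root of P
  have hxroot : (x : ℂ) ∈ P.roots := by
    rw [Polynomial.mem_roots hPne]
    have haev : Polynomial.aeval x p = 0 := by rw [hp]; exact minpoly.aeval ℤ x
    have hcomp : Int.castRingHom ℂ = Complex.ofRealHom.comp (Int.castRingHom ℝ) := by
      ext1; simp
    have hPalt : P = (p.map (Int.castRingHom ℝ)).map Complex.ofRealHom := by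
      rw [hP, Polynomial.map_map, ← hcomp]
    have hevalR : (p.map (Int.castRingHom ℝ)).eval x = 0 := by
      rw [Polynomial.eval_map, ← algebraMap_int_eq, ← Polynomial.aeval_def, haev]
    show P.eval (x : ℂ) = 0
    rw [hPalt, Polynomial.eval_map]
    have : (x : ℂ) = Complex.ofRealHom x := rfl
    rw [this, Polynomial.eval₂_at_apply, hevalR, map_zero]
  -- norm argument: |coeff 0| = product of |roots| < 1, but it's a nonzero integer
  have hsplit : P.Splits := IsAlgClosed.splits P
  have hfact : P = (P.roots.map fun a => X - C a).prod :=
    hsplit.eq_prod_roots_of_monic hPmonic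
  have heval0 : ‖P.eval 0‖ = (P.roots.map fun z => ‖z‖).prod := by
    conv_lhs => rw [hfact]
    rw [Polynomial.eval_multiset_prod, Multiset.map_map]
    rw [show ∀ s : Multiset ℂ, ‖s.prod‖ = (s.map fun z => ‖z‖).prod from
      fun s => map_multiset_prod (normHom : ℂ →*₀ ℝ) s, Multiset.map_map]
    congr 1
    apply Multiset.map_congr rfl
    intro a _
    simp
  obtain ⟨t, ht⟩ := Multiset.exists_cons_of_mem hxroot
  have hprod_lt : (P.roots.map fun z => ‖z‖).prod < 1 := by
    rw [ht, Multiset.map_cons, Multiset.prod_cons]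
    have hxabs : ‖(x : ℂ)‖ = x := by
      rw [Complex.norm_real, Real.norm_eq_abs, abs_of_pos hx0]
    have htle : (t.map fun z => ‖z‖).prod ≤ 1 := by
      apply multiset_prod_le_one
      intro r hr
      obtain ⟨y, hy, rfl⟩ := Multiset.mem_map.mp hr
      have : y ∈ P.roots := ht ▸ Multiset.mem_cons_of_mem hy
      exact ⟨norm_nonneg _, hroots_le y this⟩
    have htnn : 0 ≤ (t.map fun z => ‖z‖).prod :=
      Multiset.prod_nonneg fun r hr => by
        obtain ⟨y, _, rfl⟩ := Multiset.mem_map.mp hr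
        exact norm_nonneg _
    calc ‖(x : ℂ)‖ * (t.map fun z => ‖z‖).prod
        ≤ ‖(x : ℂ)‖ * 1 := by
          apply mul_le_mul_of_nonneg_left htle (norm_nonneg _)
      _ = x := by rw [mul_one, hxabs]
      _ < 1 := hx1
  have hPe0 : P.eval 0 = ((p.coeff 0 : ℤ) : ℂ) := by
    rw [hP, Polynomial.eval_map, Polynomial.eval₂_at_zero]
    simp
  have h1le : (1 : ℝ) ≤ ‖P.eval 0‖ := by
    rw [hPe0]
    rw [show ((p.coeff 0 : ℤ) : ℂ) = ((p.coeff 0 : ℤ) : ℝ) by push_cast; ring]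
    rw [Complex.norm_real, Real.norm_eq_abs]
    rw [← Int.cast_abs]
    exact_mod_cast Int.one_le_abs hc0
  rw [heval0] at h1le
  exact absurd hprod_lt (not_lt.mpr h1le)

/-- Let `m ≥ 3`, `1 ≤ j < m` be integers and let `λ > 1` be real with
`λ^(2m) = λ^(2j) + 1`. Then `arccos(λ⁻ᵐ)/π` is irrational. -/
theorem stmt_7 (m j : ℕ) (hm : 3 ≤ m) (hj : 1 ≤ j) (hjm : j < m) (l : ℝ) (hl : 1 < l)
    (h : l ^ (2 * m) = l ^ (2 * j) + 1) :
    Irrational (Real.arccos (l ^ (-(m : ℤ))) / Real.pi) := by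
  have hm0 : m ≠ 0 := by omega
  have hl0 : (0 : ℝ) < l := lt_trans one_pos hl
  have hlne : l ≠ 0 := ne_of_gt hl0
  set x : ℝ := l ^ (-(m : ℤ)) with hxdef
  have hxeq : x = (l⁻¹) ^ m := by
    rw [hxdef, zpow_neg, zpow_natCast, inv_pow]
  have hlm1 : 1 < l ^ m := one_lt_pow₀ hl hm0
  have hx0 : 0 < x := by
    rw [hxeq]
    positivity
  have hx1 : x < 1 := by
    rw [hxeq, inv_pow]
    exact inv_lt_one_of_one_lt₀ hlm1
  -- l⁻¹ is an algebraic integer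
  have hinv_int : IsIntegral ℤ (l⁻¹) := by
    refine ⟨X ^ (2 * m) + (X ^ (2 * (m - j)) - 1), ?_, ?_⟩
    · apply Polynomial.monic_X_pow_add
      have hk : 0 < 2 * (m - j) := by omega
      rw [show (1 : ℤ[X]) = C 1 by simp, Polynomial.degree_X_pow_sub_C hk]
      exact_mod_cast (by omega : 2 * (m - j) < 2 * m)
    · have key : (l⁻¹) ^ (2 * m) + (l⁻¹) ^ (2 * (m - j)) - 1 = 0 := by
        have hpow : l ^ (2 * (m - j)) * l ^ (2 * j) = l ^ (2 * m) := by
          rw [← pow_add]; congr 1; omega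
        have hlm0 : l ^ (2 * m) ≠ 0 := pow_ne_zero _ hlne
        have hb : l ^ (2 * (m - j)) ≠ 0 := pow_ne_zero _ hlne
        rw [inv_pow, inv_pow, ← one_div, ← one_div, div_add_div _ _ hlm0 hb,
          div_sub_one (mul_ne_zero hlm0 hb), div_eq_zero_iff]
        left
        linear_combination (-(l ^ (2 * (m - j)))) * h - hpow
      have : Polynomial.aeval l⁻¹ (X ^ (2 * m) + (X ^ (2 * (m - j)) - 1) : ℤ[X])
          = (l⁻¹) ^ (2 * m) + ((l⁻¹) ^ (2 * (m - j)) - 1) := by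
        simp
      rw [← Polynomial.aeval_def, this]
      linarith [key]
  have hint : IsIntegral ℤ x := by
    rw [hxeq]
    exact hinv_int.pow m
  -- main argument
  rw [show Real.arccos x / Real.pi = Real.arccos x / Real.pi from rfl]
  intro ⟨a, ha⟩
  have hpi : Real.pi ≠ 0 := Real.pi_ne_zero
  have harc : Real.arccos x = a * Real.pi := by
    field_simp at ha
    linarith [ha]
  -- cos of arccos
  have hcos : Real.cos (Real.arccos x) = x :=
    Real.cos_arccos (by linarith) (le_of_lt hx1)
  set n : ℤ := 2 * (a.den : ℤ) with hndef
  have hn0 : n ≠ 0 := by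
    have := a.pos
    simp only [hndef]
    omega
  have hT : (Polynomial.Chebyshev.T ℝ n).eval x = 1 := by
    rw [← hcos, Polynomial.Chebyshev.T_real_cos, harc]
    have hna : (n : ℝ) * ((a : ℝ) * Real.pi) = (a.num : ℝ) * (2 * Real.pi) := by
      have hda : ((a.den : ℝ)) * (a : ℝ) = (a.num : ℝ) := by
        rw [Rat.cast_def]
        field_simp
      push_cast [hndef]
      calc 2 * (a.den : ℝ) * ((a : ℝ) * Real.pi)
          = 2 * ((a.den : ℝ) * (a : ℝ)) * Real.pi := by ring
        _ = 2 * (a.num : ℝ) * Real.pi := by rw [hda]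
        _ = (a.num : ℝ) * (2 * Real.pi) := by ring
    rw [hna]
    exact Real.cos_int_mul_two_pi a.num
  exact not_T_eq_one_of_isIntegral hint hx0 hx1 hn0 hT
end

section
/- Let m ≥ 3 and 1 ≤ j < m be integers with gcd(m, j) = 1. Then the polynomial x^m − x^j − 1 has a unique real root η with η > 1, and every complex root z of x^m − x^j − 1 with z ≠ η satisfies |z| < η. -/
/-- Strict monotonicity of `x ↦ x^m - x^j` on `[1, ∞)` when `1 ≤ j < m`. -/
lemma aux_mono_stmt10 (m j : ℕ) (hj : 1 ≤ j) (hjm : j < m) {a b : ℝ}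
    (ha : 1 ≤ a) (hab : a < b) : a ^ m - a ^ j < b ^ m - b ^ j := by
  set k := m - j with hk
  have hkm : m = j + k := by omega
  have hk1 : 1 ≤ k := by omega
  have hb : 1 ≤ b := le_of_lt (lt_of_le_of_lt ha hab)
  have hA : (0:ℝ) < a ^ j := pow_pos (by linarith) j
  have hAB : a ^ j ≤ b ^ j := pow_le_pow_left₀ (by linarith) (le_of_lt hab) j
  have hC : (1:ℝ) ≤ a ^ k := one_le_pow₀ ha
  have hCD : a ^ k < b ^ k :=
    pow_lt_pow_left₀ hab (by linarith) (by omega)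
  have hm1 : a ^ m = a ^ j * a ^ k := by rw [hkm, pow_add]
  have hm2 : b ^ m = b ^ j * b ^ k := by rw [hkm, pow_add]
  rw [hm1, hm2]
  nlinarith [mul_le_mul_of_nonneg_right hAB (by linarith : (0:ℝ) ≤ a ^ k - 1),
    mul_lt_mul_of_pos_left hCD (lt_of_lt_of_le hA hAB)]

/-- Let `m ≥ 3` and `1 ≤ j < m` with `gcd(m,j) = 1`. Then `x^m - x^j - 1` has a unique
real root `η > 1`, and every complex root `z ≠ η` satisfies `|z| < η`. -/
theorem stmt_10 (m j : ℕ) (hm : 3 ≤ m) (hj : 1 ≤ j) (hjm : j < m)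
    (hgcd : Nat.gcd m j = 1) :
    ∃ η : ℝ, 1 < η ∧ η ^ m = η ^ j + 1 ∧
      (∀ x : ℝ, 1 < x → x ^ m = x ^ j + 1 → x = η) ∧
      (∀ z : ℂ, z ^ m = z ^ j + 1 → z ≠ (η : ℂ) → ‖z‖ < η) := by
  -- existence via IVT on [1,2]
  set f : ℝ → ℝ := fun x => x ^ m - x ^ j - 1 with hf
  have hcont : ContinuousOn f (Set.Icc (1:ℝ) 2) := by
    apply Continuous.continuousOn; continuity
  have hf1 : f 1 = -1 := by simp [hf]
  have hf2 : (0:ℝ) ≤ f 2 := by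
    have h1 : (2:ℝ) ^ (j+1) ≤ 2 ^ m := pow_le_pow_right₀ (by norm_num) (by omega)
    have h2 : (2:ℝ) ^ (j+1) = 2 * 2 ^ j := by ring
    have h3 : (1:ℝ) ≤ 2 ^ j := one_le_pow₀ (by norm_num)
    simp only [hf]; nlinarith
  have h0mem : (0:ℝ) ∈ Set.Icc (f 1) (f 2) :=
    ⟨by rw [hf1]; linarith, hf2⟩
  obtain ⟨η, hηmem, hηroot⟩ := intermediate_value_Icc (by norm_num : (1:ℝ) ≤ 2) hcont h0mem
  have hηeq : η ^ m = η ^ j + 1 := by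
    have := hηroot; simp only [hf] at this; linarith
  have hη1 : 1 < η := by
    rcases lt_or_eq_of_le hηmem.1 with h | h
    · exact h
    · exfalso; rw [← h] at hηeq; simp at hηeq
  have huniq : ∀ x : ℝ, 1 < x → x ^ m = x ^ j + 1 → x = η := by
    intro x hx hxeq
    by_contra hne
    rcases lt_or_gt_of_ne hne with h | h
    · have := aux_mono_stmt10 m j hj hjm (le_of_lt hx) h
      rw [hηeq, hxeq] at this; linarith
    · have := aux_mono_stmt10 m j hj hjm (le_of_lt hη1) h
      rw [hηeq, hxeq] at this; linarith
  refine ⟨η, hη1, hηeq, huniq, ?_⟩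
  intro z hz hzne
  set r := ‖z‖ with hr
  -- r^m ≤ r^j + 1
  have habs : r ^ m ≤ r ^ j + 1 := by
    have : ‖z ^ m‖ = ‖z ^ j + 1‖ := by rw [hz]
    rw [norm_pow] at this
    calc r ^ m = ‖z ^ j + 1‖ := this
      _ ≤ ‖z ^ j‖ + ‖(1:ℂ)‖ := norm_add_le _ _
      _ = r ^ j + 1 := by rw [norm_pow, norm_one]
  have hrle : r ≤ η := by
    by_contra h
    push_neg at h
    have := aux_mono_stmt10 m j hj hjm (le_of_lt hη1) h
    rw [hηeq] at this; linarith
  rcases lt_or_eq_of_le hrle with h | hreq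
  · exact h
  exfalso
  -- r = η : equality case of triangle inequality
  have hrη : r = η := hreq
  have heq : ‖z ^ j + 1‖ = ‖z ^ j‖ + 1 := by
    have h1 : ‖z ^ j + 1‖ = r ^ m := by
      rw [← hz, norm_pow]
    rw [h1, norm_pow, ← hr, hrη, hηeq]
  set w := z ^ j with hw
  have hRe : w.re = ‖w‖ := by
    have e1 : ‖w + 1‖ ^ 2 = Complex.normSq (w + 1) := Complex.sq_norm _
    have e2 : ‖w‖ ^ 2 = Complex.normSq w := Complex.sq_norm _
    have e3 : Complex.normSq (w + 1) = Complex.normSq w + 2 * w.re + 1 := by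
      simp [Complex.normSq_apply]; ring
    have e4 : ‖w + 1‖ ^ 2 = (‖w‖ + 1) ^ 2 := by rw [heq]
    nlinarith
  have hIm : w.im = 0 := by
    have e2 : ‖w‖ ^ 2 = w.re ^ 2 + w.im ^ 2 := by
      rw [Complex.sq_norm, Complex.normSq_apply]; ring
    rw [hRe] at e2
    have : w.im ^ 2 = 0 := by nlinarith
    exact pow_eq_zero_iff (by norm_num) |>.mp this
  have hwre : w = ((η : ℂ)) ^ j := by
    have habsw : ‖w‖ = η ^ j := by rw [hw, norm_pow, ← hr, hrη]
    have hc : ((η:ℂ)) ^ j = ((η ^ j : ℝ) : ℂ) := by push_cast; ring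
    rw [hc]
    apply Complex.ext
    · rw [Complex.ofReal_re, hRe, habsw]
    · rw [Complex.ofReal_im, hIm]
  -- z^m = η^m
  have hzm : z ^ m = ((η : ℂ)) ^ m := by
    have hc : ((η:ℂ)) ^ m = ((η ^ m : ℝ) : ℂ) := by push_cast; ring
    rw [hz, hwre, hc, hηeq]; push_cast; ring
  have hηne : (η : ℂ) ≠ 0 := by
    simp only [ne_eq, Complex.ofReal_eq_zero]; linarith
  set u := z / (η : ℂ) with hu
  have hum : u ^ m = 1 := by
    rw [hu, div_pow, hzm, div_self (pow_ne_zero _ hηne)]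
  have huj : u ^ j = 1 := by
    rw [hu, div_pow, ← hw, hwre, div_self (pow_ne_zero _ hηne)]
  have hdvd : orderOf u ∣ 1 := by
    rw [← hgcd]
    exact Nat.dvd_gcd (orderOf_dvd_of_pow_eq_one hum) (orderOf_dvd_of_pow_eq_one huj)
  have hu1 : u = 1 := by
    rw [← orderOf_eq_one_iff]
    exact Nat.dvd_one.mp hdvd
  apply hzne
  rw [hu, div_eq_one_iff_eq hηne] at hu1
  exact hu1
end

section
/- Let S be an m×m real matrix with nonnegative entries such that S^k has all entries strictly positive for some k ≥ 1 (S is primitive). Let M be an m×m complex matrix with |M_{ij}| ≤ S_{ij} for all i, j, and suppose there exist r ≥ 1 and indices k₀, ℓ₀ such that |(M^r)_{k₀ℓ₀}| < (S^r)_{k₀ℓ₀}. Then for all indices i, j, the ratio (M^s)_{ij} / (S^s)_{ij} tends to 0 as s → ∞. -/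
open Filter

section Aux

variable {m : ℕ}

/-- Entries of powers of an entrywise nonnegative matrix are nonnegative. -/
lemma aux_pow_nonneg (S : Matrix (Fin m) (Fin m) ℝ) (hS0 : ∀ i j, 0 ≤ S i j) :
    ∀ s i j, 0 ≤ (S ^ s) i j := by
  intro s
  induction s with
  | zero =>
    intro i j
    simp only [pow_zero, Matrix.one_apply]
    split <;> norm_num
  | succ n ih =>
    intro i j
    rw [pow_succ, Matrix.mul_apply]
    exact Finset.sum_nonneg fun a _ => mul_nonneg (ih i a) (hS0 a j)

/-- Entrywise domination passes to powers. -/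
lemma aux_abs_pow_le (S : Matrix (Fin m) (Fin m) ℝ) (M : Matrix (Fin m) (Fin m) ℂ)
    (hMS : ∀ i j, ‖M i j‖ ≤ S i j) :
    ∀ s i j, ‖(M ^ s) i j‖ ≤ (S ^ s) i j := by
  intro s
  induction s with
  | zero =>
    intro i j
    simp only [pow_zero, Matrix.one_apply]
    split <;> simp
  | succ n ih =>
    intro i j
    rw [pow_succ, pow_succ, Matrix.mul_apply, Matrix.mul_apply]
    calc ‖∑ a, (M ^ n) i a * M a j‖
        ≤ ∑ a, ‖(M ^ n) i a * M a j‖ := norm_sum_le _ _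
      _ ≤ ∑ a, (S ^ n) i a * S a j := by
          refine Finset.sum_le_sum fun a _ => ?_
          rw [norm_mul]
          exact mul_le_mul (ih i a) (hMS a j) (norm_nonneg _)
            (le_trans (norm_nonneg _) (ih i a))

/-- Submultiplicativity of entrywise absolute values for matrix products. -/
lemma aux_abs_mul_le (A B : Matrix (Fin m) (Fin m) ℂ) (i j : Fin m) :
    ‖(A * B) i j‖ ≤ ∑ a, ‖A i a‖ * ‖B a j‖ := by
  rw [Matrix.mul_apply]
  refine le_trans (norm_sum_le _ _) ?_
  refine Finset.sum_le_sum fun a _ => ?_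
  rw [norm_mul]

end Aux

/-- Let `S` be a primitive nonnegative real `m × m` matrix and `M` a complex matrix
with `|M i j| ≤ S i j` entrywise. If for some `r ≥ 1` and some entry
`|(M^r) k₀ ℓ₀| < (S^r) k₀ ℓ₀`, then `(M^s) i j / (S^s) i j → 0` as `s → ∞`,
for all indices `i`, `j`. -/
theorem stmt_11 {m : ℕ} (S : Matrix (Fin m) (Fin m) ℝ)
    (hS0 : ∀ i j, 0 ≤ S i j)
    (hprim : ∃ k : ℕ, 1 ≤ k ∧ ∀ i j, 0 < (S ^ k) i j)
    (M : Matrix (Fin m) (Fin m) ℂ)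
    (hMS : ∀ i j, ‖M i j‖ ≤ S i j)
    (hlt : ∃ r : ℕ, 1 ≤ r ∧ ∃ k₀ ℓ₀ : Fin m,
      ‖(M ^ r) k₀ ℓ₀‖ < (S ^ r) k₀ ℓ₀) :
    ∀ i j : Fin m,
      Tendsto (fun s : ℕ => (M ^ s) i j / (((S ^ s) i j : ℝ) : ℂ)) atTop (nhds 0) := by
  obtain ⟨k, hk1, hkpos⟩ := hprim
  obtain ⟨r, hr1, k₀, ℓ₀, hrlt⟩ := hlt
  have hm0 : 0 < m := k₀.pos
  have hSpow0 : ∀ s i j, 0 ≤ (S ^ s) i j := aux_pow_nonneg S hS0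
  have habs : ∀ s i j, ‖(M ^ s) i j‖ ≤ (S ^ s) i j := aux_abs_pow_le S M hMS
  -- every column of S has a positive entry
  have hcol : ∀ j, ∃ a, 0 < S a j := by
    intro j
    by_contra h
    push_neg at h
    have hz : ∀ a, S a j = 0 := fun a => le_antisymm (h a) (hS0 a j)
    obtain ⟨k', rfl⟩ : ∃ k', k = k' + 1 := ⟨k - 1, by omega⟩
    have := hkpos k₀ j
    rw [pow_succ, Matrix.mul_apply] at this
    simp [hz] at this
  -- positivity of high powers
  have hpos : ∀ s, k ≤ s → ∀ i j, 0 < (S ^ s) i j := by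
    intro s hs
    induction s, hs using Nat.le_induction with
    | base => exact hkpos
    | succ n hn ih =>
      intro i j
      obtain ⟨a, ha⟩ := hcol j
      rw [pow_succ, Matrix.mul_apply]
      exact Finset.sum_pos' (fun b _ => mul_nonneg (hSpow0 n i b) (hS0 b j))
        ⟨a, Finset.mem_univ a, mul_pos (ih i a) ha⟩
  -- constants
  have hne : (Finset.univ : Finset (Fin m × Fin m)).Nonempty := ⟨(k₀, k₀), Finset.mem_univ _⟩
  set α := Finset.univ.inf' hne (fun p : Fin m × Fin m => (S ^ k) p.1 p.2) with hαdef
  set β := Finset.univ.sup' hne (fun p : Fin m × Fin m => (S ^ k) p.1 p.2) with hβdef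
  set γ := Finset.univ.sup' hne (fun p : Fin m × Fin m => (S ^ (k + r)) p.1 p.2) with hγdef
  have hα : 0 < α := by
    rw [hαdef, Finset.lt_inf'_iff]
    exact fun p _ => hkpos p.1 p.2
  have hαle : ∀ i j, α ≤ (S ^ k) i j := fun i j =>
    Finset.inf'_le (fun p : Fin m × Fin m => (S ^ k) p.1 p.2) (Finset.mem_univ (i, j))
  have hβle : ∀ i j, (S ^ k) i j ≤ β := fun i j =>
    Finset.le_sup' (fun p : Fin m × Fin m => (S ^ k) p.1 p.2) (Finset.mem_univ (i, j))
  have hγle : ∀ i j, (S ^ (k + r)) i j ≤ γ := fun i j =>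
    Finset.le_sup' (fun p : Fin m × Fin m => (S ^ (k + r)) p.1 p.2) (Finset.mem_univ (i, j))
  have hβ : 0 < β := lt_of_lt_of_le hα (le_trans (hαle k₀ k₀) (hβle k₀ k₀))
  have hγ : 0 < γ := lt_of_lt_of_le (hpos (k + r) (by omega) k₀ k₀) (hγle k₀ k₀)
  set ε := (S ^ r) k₀ ℓ₀ - ‖(M ^ r) k₀ ℓ₀‖ with hεdef
  have hε : 0 < ε := by rw [hεdef]; linarith
  -- row comparison for powers ≥ k : any entry in a column dominated via ℓ₀ row
  have hrow : ∀ t a j, (S ^ (k + t)) a j ≤ β / α * (S ^ (k + t)) ℓ₀ j := by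
    intro t a j
    have hT0 : 0 ≤ ∑ x, (S ^ t) x j := Finset.sum_nonneg fun x _ => hSpow0 t x j
    have h1 : (S ^ (k + t)) a j ≤ β * ∑ x, (S ^ t) x j := by
      rw [pow_add, Matrix.mul_apply, Finset.mul_sum]
      exact Finset.sum_le_sum fun x _ =>
        mul_le_mul_of_nonneg_right (hβle a x) (hSpow0 t x j)
    have h2 : α * ∑ x, (S ^ t) x j ≤ (S ^ (k + t)) ℓ₀ j := by
      rw [pow_add, Matrix.mul_apply, Finset.mul_sum]
      exact Finset.sum_le_sum fun x _ =>
        mul_le_mul_of_nonneg_right (hαle ℓ₀ x) (hSpow0 t x j)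
    calc (S ^ (k + t)) a j ≤ β * ∑ x, (S ^ t) x j := h1
      _ = β / α * (α * ∑ x, (S ^ t) x j) := by field_simp
      _ ≤ β / α * (S ^ (k + t)) ℓ₀ j :=
          mul_le_mul_of_nonneg_left h2 (by positivity)
  -- deficiency bound for M^(k+r)
  have hdef : ∀ i a, ‖(M ^ (k + r)) i a‖ ≤
      (S ^ (k + r)) i a - (if a = ℓ₀ then (S ^ k) i k₀ * ε else 0) := by
    intro i a
    have h1 : ‖(M ^ (k + r)) i a‖ ≤
        ∑ b, ‖(M ^ k) i b‖ * ‖(M ^ r) b a‖ := by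
      rw [pow_add]; exact aux_abs_mul_le _ _ i a
    have h2 : ∀ b, ‖(M ^ k) i b‖ * ‖(M ^ r) b a‖ ≤
        (S ^ k) i b * (S ^ r) b a - (if a = ℓ₀ ∧ b = k₀ then (S ^ k) i b * ε else 0) := by
      intro b
      by_cases hcase : a = ℓ₀ ∧ b = k₀
      · obtain ⟨ha, hb⟩ := hcase
        rw [if_pos ⟨ha, hb⟩, ha, hb]
        have habsr : ‖(M ^ r) k₀ ℓ₀‖ = (S ^ r) k₀ ℓ₀ - ε := by
          rw [hεdef]; ring
        have h0 : 0 ≤ (S ^ r) k₀ ℓ₀ - ε := by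
          rw [hεdef]; simp [norm_nonneg]
        rw [habsr, ← mul_sub]
        exact mul_le_mul_of_nonneg_right (habs k i k₀) h0
      · rw [if_neg hcase, sub_zero]
        exact mul_le_mul (habs k i b) (habs r b a) (norm_nonneg _)
          (le_trans (norm_nonneg _) (habs k i b))
    calc ‖(M ^ (k + r)) i a‖
        ≤ ∑ b, ‖(M ^ k) i b‖ * ‖(M ^ r) b a‖ := h1
      _ ≤ ∑ b, ((S ^ k) i b * (S ^ r) b a
            - (if a = ℓ₀ ∧ b = k₀ then (S ^ k) i b * ε else 0)) :=
          Finset.sum_le_sum fun b _ => h2 b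
      _ = (S ^ (k + r)) i a - (if a = ℓ₀ then (S ^ k) i k₀ * ε else 0) := by
          rw [Finset.sum_sub_distrib, pow_add, Matrix.mul_apply]
          congr 1
          by_cases ha : a = ℓ₀
          · simp [ha]
          · simp [ha]
  -- the contraction factor
  set δ := min (α * α * ε / ((m : ℝ) * β * γ)) 1 with hδdef
  have hδ0 : 0 < δ := by
    rw [hδdef]
    refine lt_min ?_ one_pos
    positivity
  have hδ1 : δ ≤ 1 := min_le_right _ _
  -- key geometric-deficiency inequality
  have hkey : ∀ t i j, δ * (S ^ (k + t + (k + r))) i j ≤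
      (S ^ k) i k₀ * ε * (S ^ (k + t)) ℓ₀ j := by
    intro t i j
    have hY0 : 0 ≤ (S ^ (k + t)) ℓ₀ j := hSpow0 _ _ _
    have hZ : (S ^ (k + t + (k + r))) i j ≤ γ * ((m : ℝ) * (β / α * (S ^ (k + t)) ℓ₀ j)) := by
      have e : k + t + (k + r) = (k + r) + (k + t) := by ring
      rw [e, pow_add, Matrix.mul_apply]
      calc ∑ a, (S ^ (k + r)) i a * (S ^ (k + t)) a j
          ≤ ∑ a, γ * (β / α * (S ^ (k + t)) ℓ₀ j) := by
            refine Finset.sum_le_sum fun a _ => ?_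
            exact mul_le_mul (hγle i a) (hrow t a j) (hSpow0 _ _ _) hγ.le
        _ = (m : ℝ) * (γ * (β / α * (S ^ (k + t)) ℓ₀ j)) := by
            rw [Finset.sum_const, Finset.card_univ, Fintype.card_fin, nsmul_eq_mul]
        _ = γ * ((m : ℝ) * (β / α * (S ^ (k + t)) ℓ₀ j)) := by ring
    have hδle : δ ≤ α * α * ε / ((m : ℝ) * β * γ) := min_le_left _ _
    have hm' : (0 : ℝ) < m := by exact_mod_cast hm0
    calc δ * (S ^ (k + t + (k + r))) i j
        ≤ (α * α * ε / ((m : ℝ) * β * γ)) * (γ * ((m : ℝ) * (β / α * (S ^ (k + t)) ℓ₀ j))) := by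
          exact mul_le_mul hδle hZ (hSpow0 _ _ _) (by positivity)
      _ = α * ε * (S ^ (k + t)) ℓ₀ j := by field_simp
      _ ≤ (S ^ k) i k₀ * ε * (S ^ (k + t)) ℓ₀ j := by
          have := hαle i k₀
          nlinarith [mul_nonneg hε.le hY0]
  -- one contraction step
  have hstep : ∀ t (c : ℝ), 0 ≤ c →
      (∀ i j, ‖(M ^ (k + t)) i j‖ ≤ c * (S ^ (k + t)) i j) →
      ∀ i j, ‖(M ^ (k + t + (k + r))) i j‖ ≤
        c * (1 - δ) * (S ^ (k + t + (k + r))) i j := by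
    intro t c hc hyp i j
    have e : k + t + (k + r) = (k + r) + (k + t) := by ring
    have h1 : ‖(M ^ (k + t + (k + r))) i j‖ ≤
        ∑ a, ‖(M ^ (k + r)) i a‖ * ‖(M ^ (k + t)) a j‖ := by
      rw [e, pow_add]; exact aux_abs_mul_le _ _ i j
    have h2 : ∀ a, ‖(M ^ (k + r)) i a‖ * ‖(M ^ (k + t)) a j‖ ≤
        ((S ^ (k + r)) i a - (if a = ℓ₀ then (S ^ k) i k₀ * ε else 0)) *
          (c * (S ^ (k + t)) a j) := by
      intro a
      refine mul_le_mul (hdef i a) (hyp a j) (norm_nonneg _) ?_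
      exact le_trans (norm_nonneg _) (hdef i a)
    have h3 : ∑ a, ((S ^ (k + r)) i a - (if a = ℓ₀ then (S ^ k) i k₀ * ε else 0)) *
          (c * (S ^ (k + t)) a j)
        = c * ((S ^ (k + t + (k + r))) i j - (S ^ k) i k₀ * ε * (S ^ (k + t)) ℓ₀ j) := by
      have e2 : (S ^ (k + t + (k + r))) i j = ∑ a, (S ^ (k + r)) i a * (S ^ (k + t)) a j := by
        rw [e, pow_add, Matrix.mul_apply]
      rw [e2]
      have hsplit : ∀ a, ((S ^ (k + r)) i a - (if a = ℓ₀ then (S ^ k) i k₀ * ε else 0)) *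
            (c * (S ^ (k + t)) a j)
          = c * ((S ^ (k + r)) i a * (S ^ (k + t)) a j)
            - (if a = ℓ₀ then c * ((S ^ k) i k₀ * ε * (S ^ (k + t)) a j) else 0) := by
        intro a; split_ifs <;> ring
      rw [Finset.sum_congr rfl fun a _ => hsplit a, Finset.sum_sub_distrib,
        ← Finset.mul_sum, Finset.sum_ite_eq' Finset.univ ℓ₀
          (fun a => c * ((S ^ k) i k₀ * ε * (S ^ (k + t)) a j))]
      simp only [Finset.mem_univ, if_true]
      ring
    calc ‖(M ^ (k + t + (k + r))) i j‖
        ≤ ∑ a, ‖(M ^ (k + r)) i a‖ * ‖(M ^ (k + t)) a j‖ := h1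
      _ ≤ ∑ a, ((S ^ (k + r)) i a - (if a = ℓ₀ then (S ^ k) i k₀ * ε else 0)) *
            (c * (S ^ (k + t)) a j) := Finset.sum_le_sum fun a _ => h2 a
      _ = c * ((S ^ (k + t + (k + r))) i j - (S ^ k) i k₀ * ε * (S ^ (k + t)) ℓ₀ j) := h3
      _ ≤ c * ((1 - δ) * (S ^ (k + t + (k + r))) i j) := by
          refine mul_le_mul_of_nonneg_left ?_ hc
          have := hkey t i j
          linarith
      _ = c * (1 - δ) * (S ^ (k + t + (k + r))) i j := by ring
  -- iterate the contraction
  have hiter : ∀ n t i j, ‖(M ^ (k + n * (k + r) + t)) i j‖ ≤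
      (1 - δ) ^ n * (S ^ (k + n * (k + r) + t)) i j := by
    intro n
    induction n with
    | zero =>
      intro t i j
      simpa using habs (k + 0 * (k + r) + t) i j
    | succ n ih =>
      intro t i j
      have hc : (0 : ℝ) ≤ (1 - δ) ^ n := pow_nonneg (by linarith) n
      have happ := hstep (n * (k + r) + t) ((1 - δ) ^ n) hc
        (fun i j => by
          have := ih t i j
          have e : k + n * (k + r) + t = k + (n * (k + r) + t) := by ring
          rwa [e] at this) i j
      have e2 : k + (n * (k + r) + t) + (k + r) = k + (n + 1) * (k + r) + t := by ring
      rw [e2] at happ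
      calc ‖(M ^ (k + (n + 1) * (k + r) + t)) i j‖
          ≤ (1 - δ) ^ n * (1 - δ) * (S ^ (k + (n + 1) * (k + r) + t)) i j := happ
        _ = (1 - δ) ^ (n + 1) * (S ^ (k + (n + 1) * (k + r) + t)) i j := by
            rw [pow_succ]
  -- conclude
  intro i j
  rw [NormedAddCommGroup.tendsto_nhds_zero]
  intro η hη
  obtain ⟨n, hn⟩ := exists_pow_lt_of_lt_one hη (by linarith : 1 - δ < 1)
  filter_upwards [eventually_ge_atTop (k + n * (k + r))] with s hs
  obtain ⟨t, rfl⟩ : ∃ t, s = k + n * (k + r) + t := ⟨s - (k + n * (k + r)), by omega⟩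
  have hSpos : 0 < (S ^ (k + n * (k + r) + t)) i j := hpos _ (by omega) i j
  rw [norm_div, Complex.norm_real, Real.norm_of_nonneg hSpos.le,
    div_lt_iff₀ hSpos]
  calc ‖(M ^ (k + n * (k + r) + t)) i j‖
      ≤ (1 - δ) ^ n * (S ^ (k + n * (k + r) + t)) i j := hiter n t i j
    _ < η * (S ^ (k + n * (k + r) + t)) i j := by
        exact mul_lt_mul_of_pos_right hn hSpos
end
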